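/- arXiv:1304.3680 — 2 statements merged into one kernel-verified Lean document; each statement's English description precedes it below -/
import Mathlib

section
/- Let ε ≥ 0, α ≥ 0 and r > 0 satisfy √2·α < r − ε. Let A ⊆ ℝ^d be a nonempty compact set with reach(A) ≥ r and let P ⊆ ℝ^d be a finite nonempty set with d_H(A, P) ≤ ε. Set β = r − √((r − ε)² − α²). Then for every t ≥ β and every nonempty subset σ ⊆ P: ⋂_{p ∈ σ} closedBall(p, α) ≠ ∅ if and only if A^⊕t ∩ ⋂_{p ∈ σ} closedBall(p, α) ≠ ∅. -/
open Metric Set ENNReal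
open scoped RealInnerProductSpace

/-- The reach of a set `X`: the supremum of all `r ≥ 0` such that every point `y`
with `dist (y, X) < r` has a unique nearest point in `X`. -/
noncomputable def reach {d : ℕ} (X : Set (EuclideanSpace ℝ (Fin d))) : ℝ≥0∞ :=
  sSup {r : ℝ≥0∞ | ∀ y : EuclideanSpace ℝ (Fin d),
    ENNReal.ofReal (Metric.infDist y X) < r →
      ∃! x, x ∈ X ∧ ∀ x' ∈ X, dist y x ≤ dist y x'}

section Aux

variable {E : Type*} [NormedAddCommGroup E] [InnerProductSpace ℝ E] [ProperSpace E]

private lemma le_of_sq_le'' {a b : ℝ} (ha : 0 ≤ a) (hb : 0 ≤ b) (h : a^2 ≤ b^2) : a ≤ b := by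
  nlinarith

private lemma le_infDist' {A : Set E} (hA : A.Nonempty) {x : E} {c : ℝ}
    (h : ∀ y ∈ A, c ≤ dist x y) : c ≤ Metric.infDist x A := by
  by_contra hlt
  push_neg at hlt
  obtain ⟨y, hy, hdy⟩ := (Metric.infDist_lt_iff hA).1 hlt
  exact absurd (h y hy) (by linarith)

/-- Continuity of the (unique) nearest-point projection at a point of uniqueness. -/
private lemma proj_cont (A : Set E) (hAc : IsCompact A) (z b : E) (hbA : b ∈ A)
    (hbd : dist z b = Metric.infDist z A)
    (huniq : ∀ b' ∈ A, dist z b' = Metric.infDist z A → b' = b) :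
    ∀ ε > 0, ∃ h₀ > 0, ∀ w, dist w z ≤ h₀ → ∀ b' ∈ A, dist w b' = Metric.infDist w A →
      dist b' b ≤ ε := by
  by_contra hcon
  push_neg at hcon
  obtain ⟨ε, hε, hbad⟩ := hcon
  have hseq : ∀ n : ℕ, ∃ w b', dist w z ≤ 1/((n:ℝ)+1) ∧ b' ∈ A ∧
      dist w b' = Metric.infDist w A ∧ ε < dist b' b := by
    intro n
    obtain ⟨w, hw, b', hb'A, hb'd, hb'far⟩ := hbad (1/((n:ℝ)+1)) (by positivity)
    exact ⟨w, b', hw, hb'A, hb'd, hb'far⟩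
  choose w bs h1 h2 h3 h4 using hseq
  obtain ⟨c', hc'A, φ, hφ, htend⟩ := hAc.tendsto_subseq h2
  have hwz : Filter.Tendsto (w ∘ φ) Filter.atTop (nhds z) := by
    rw [tendsto_iff_dist_tendsto_zero]
    refine squeeze_zero (fun n => dist_nonneg) (fun n => (h1 (φ n)).trans ?_)
      tendsto_one_div_add_atTop_nhds_zero_nat
    have : ((n:ℝ)+1) ≤ ((φ n : ℝ)+1) := by
      have := hφ.le_apply (x := n)
      exact_mod_cast by linarith [(Nat.cast_le (α := ℝ)).2 this]
    exact one_div_le_one_div_of_le (by positivity) this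
  have l1 : Filter.Tendsto (fun n => dist ((w ∘ φ) n) ((bs ∘ φ) n)) Filter.atTop
      (nhds (dist z c')) := hwz.dist htend
  have l2 : Filter.Tendsto (fun n => Metric.infDist ((w ∘ φ) n) A) Filter.atTop
      (nhds (Metric.infDist z A)) := ((Metric.continuous_infDist_pt A).tendsto z).comp hwz
  have l12 : (fun n => dist ((w ∘ φ) n) ((bs ∘ φ) n))
      = fun n => Metric.infDist ((w ∘ φ) n) A := by
    funext n; exact h3 (φ n)
  have key : dist z c' = Metric.infDist z A := by
    rw [l12] at l1
    exact tendsto_nhds_unique l1 l2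
  have hc'b : c' = b := huniq c' hc'A key
  have l3 : Filter.Tendsto (fun n => dist ((bs ∘ φ) n) b) Filter.atTop (nhds (dist c' b)) :=
    htend.dist tendsto_const_nhds
  have : ε ≤ dist c' b := ge_of_tendsto l3 (Filter.Eventually.of_forall fun n => (h4 (φ n)).le)
  rw [hc'b, dist_self] at this
  linarith

set_option maxHeartbeats 1600000 in
/-- One growth step for the distance function along the normal direction. -/
private lemma step_lemma (A : Set E) (hAc : IsCompact A) (hAne : A.Nonempty)
    (z b : E) (hbA : b ∈ A) (hbd : dist z b = Metric.infDist z A)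
    (huniq : ∀ b' ∈ A, dist z b' = Metric.infDist z A → b' = b)
    (hz0 : 0 < Metric.infDist z A) (c : ℝ) (hc0 : 0 < c) (hc1 : c < 1)
    (hbar : ℝ) (hbarpos : 0 < hbar) :
    ∃ h : ℝ, 0 < h ∧ h ≤ hbar ∧
      Metric.infDist z A + c * h ≤
        Metric.infDist (z + h • ((Metric.infDist z A)⁻¹ • (z - b))) A := by
  set dz := Metric.infDist z A with hdz
  set V := dz⁻¹ • (z - b) with hVdef
  have hzb : ‖z - b‖ = dz := by rw [← dist_eq_norm]; exact hbd
  have hVnorm : ‖V‖ = 1 := by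
    rw [hVdef, norm_smul, hzb, Real.norm_eq_abs, abs_inv, abs_of_pos hz0,
      inv_mul_cancel₀ hz0.ne']
  have h1c : 0 < 1 - c := by linarith
  have hεpos : 0 < dz*(1-c)/2 := by
    apply div_pos (mul_pos hz0 h1c); norm_num
  obtain ⟨h₀, hh₀pos, hcont⟩ := proj_cont A hAc z b hbA hbd huniq (dz*(1-c)/2) hεpos
  set h := min hbar h₀ with hhdef
  have hhpos : 0 < h := lt_min hbarpos hh₀pos
  refine ⟨h, hhpos, min_le_left _ _, ?_⟩
  set w := z + h • V with hwdef
  have hwz : dist w z = h := by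
    rw [hwdef, dist_eq_norm]
    simp only [add_sub_cancel_left]
    rw [norm_smul, hVnorm, Real.norm_eq_abs, abs_of_pos hhpos, mul_one]
  obtain ⟨b', hb'A, hb'd⟩ := hAc.exists_infDist_eq_dist hAne w
  have hnear : dist b' b ≤ dz*(1-c)/2 :=
    hcont w (by rw [hwz]; exact min_le_right _ _) b' hb'A hb'd.symm
  have hzb' : dz ≤ ‖z - b'‖ := by
    rw [← dist_eq_norm]; exact Metric.infDist_le_dist_of_mem hb'A
  have hinner1 : ⟪V, z - b⟫ = dz := by
    rw [hVdef, real_inner_smul_left, real_inner_self_eq_norm_sq, hzb]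
    field_simp
  have hinner2 : |⟪V, b - b'⟫| ≤ dist b' b := by
    calc |⟪V, b - b'⟫| ≤ ‖V‖*‖b-b'‖ := abs_real_inner_le_norm _ _
    _ = dist b b' := by rw [hVnorm, one_mul, dist_eq_norm]
    _ = dist b' b := dist_comm _ _
  have hsplit : ⟪V, z - b'⟫ = ⟪V, z - b⟫ + ⟪V, b - b'⟫ := by
    rw [← inner_add_right]
    congr 1
    abel
  have hinner : dz - dz*(1-c)/2 ≤ ⟪V, z - b'⟫ := by
    have hlb : -(dz*(1-c)/2) ≤ ⟪V, b - b'⟫ := by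
      have := neg_abs_le ⟪V, b - b'⟫
      linarith [hinner2.trans hnear]
    rw [hsplit, hinner1]
    linarith
  have hw_expand : ‖w - b'‖^2 = ‖z - b'‖^2 + 2*h*⟪V, z - b'⟫ + h^2 := by
    have hrw : w - b' = (z - b') + h • V := by rw [hwdef]; abel
    rw [hrw, norm_add_sq_real]
    rw [real_inner_smul_right, real_inner_comm]
    rw [norm_smul, hVnorm, Real.norm_eq_abs, abs_of_pos hhpos, mul_one]
    ring
  have hsq : dz^2 ≤ ‖z - b'‖^2 := by nlinarith [hz0.le]
  have e1 : h*(dz - dz*(1-c)/2) ≤ h*⟪V, z - b'⟫ := mul_le_mul_of_nonneg_left hinner hhpos.le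
  have e2 : 0 ≤ h*dz*(1-c) := mul_nonneg (mul_nonneg hhpos.le hz0.le) h1c.le
  have e3 : (0:ℝ) ≤ 1 - c^2 := by nlinarith
  have e4 : 0 ≤ h^2*(1-c^2) := mul_nonneg (sq_nonneg h) e3
  have hfinal_sq : (dz + c*h)^2 ≤ ‖w - b'‖^2 := by
    linarith [hw_expand, hsq, e1, e2, e4]
  have hnn : 0 ≤ dz + c*h := by nlinarith [mul_pos hc0 hhpos]
  have hle := le_of_sq_le'' hnn (norm_nonneg _) hfinal_sq
  rw [hb'd, dist_eq_norm]
  exact hle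



set_option maxHeartbeats 1600000 in
private lemma rigid_lemma (A : Set E) (hAne : A.Nonempty) (a : E) (haA : a ∈ A)
    (v : E) (hv : ‖v‖ = 1) (δ L : ℝ) (hδ0 : 0 < δ) (hL0 : 0 < L) (b' : E) (hb' : b' ∈ A)
    (claim : ∀ c : ℝ, 0 < c → c < 1 →
      ∃ zc : E, dist zc (a + δ • v) ≤ L ∧ δ + c * L ≤ Metric.infDist zc A) :
    ∀ θ : ℝ, 0 < θ → δ + L ≤ dist (a + (δ + L) • v) b' + θ := by
  intro θ hθ
  obtain ⟨m, hm0, hm12, hm2, hm3⟩ : ∃ m : ℝ, 0 < m ∧ m ≤ 1/2 ∧ m ≤ θ/(2*L) ∧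
      m ≤ θ^2*δ/(16*L^2*(δ+L)) := by
    refine ⟨min (1/2) (min (θ/(2*L)) (θ^2*δ/(16*L^2*(δ+L)))), ?_, min_le_left _ _,
      (min_le_right _ _).trans (min_le_left _ _),
      (min_le_right _ _).trans (min_le_right _ _)⟩
    exact lt_min (by norm_num) (lt_min (by positivity) (by positivity))
  obtain ⟨zc, hzc1, hzc2⟩ := claim (1-m) (by linarith) (by linarith)
  set X := a + (δ + L) • v with hX
  set w := zc - (a + δ • v) with hw
  have hwL : ‖w‖ ≤ L := by rw [hw, ← dist_eq_norm]; exact hzc1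
  have hca : zc - a = w + δ • v := by rw [hw]; abel
  have h3 : ‖w + δ • v‖^2 = ‖w‖^2 + 2*δ*⟪v, w⟫ + δ^2 := by
    rw [norm_add_sq_real, real_inner_smul_right, norm_smul, Real.norm_eq_abs,
      abs_of_pos hδ0, hv, mul_one, real_inner_comm]
    ring
  have hJ : (δ + (1-m)*L)^2 ≤ ‖w‖^2 + 2*δ*⟪v, w⟫ + δ^2 := by
    have h1 : δ + (1-m)*L ≤ ‖w + δ • v‖ := by
      rw [← hca, ← dist_eq_norm]
      exact hzc2.trans (Metric.infDist_le_dist_of_mem haA)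
    have h4 : 0 ≤ δ + (1-m)*L := by nlinarith
    calc (δ + (1-m)*L)^2 ≤ ‖w + δ • v‖^2 := pow_le_pow_left₀ h4 h1 2
    _ = _ := h3
  have hXz : ‖zc - X‖^2 = ‖w‖^2 - 2*L*⟪v, w⟫ + L^2 := by
    have h5 : zc - X = w - L • v := by
      rw [hX, hw, add_smul]
      abel
    rw [h5, norm_sub_sq_real, real_inner_smul_right, norm_smul, Real.norm_eq_abs,
      abs_of_pos hL0, hv, mul_one, real_inner_comm]
    ring
  have hm3' : m * (16*L^2*(δ+L)) ≤ θ^2*δ := by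
    have hpos : 0 < 16*L^2*(δ+L) := by positivity
    exact (le_div_iff₀ hpos).mp hm3
  have hzcX : ‖zc - X‖^2 ≤ θ^2/8 := by
    have e0 : ‖w‖^2 ≤ L^2 := by nlinarith [norm_nonneg w]
    have e1 : (δ + (1-m)*L)^2 - L^2 - δ^2 ≤ 2*δ*⟪v, w⟫ := by linarith [hJ, e0]
    have e2 : L*((δ + (1-m)*L)^2 - L^2 - δ^2) ≤ L*(2*δ*⟪v, w⟫) :=
      mul_le_mul_of_nonneg_left e1 hL0.le
    have hXzδ : δ*‖zc - X‖^2 = δ*‖w‖^2 - 2*δ*L*⟪v, w⟫ + δ*L^2 := by rw [hXz]; ring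
    have e0δ : δ*‖w‖^2 ≤ δ*L^2 := mul_le_mul_of_nonneg_left e0 hδ0.le
    have e3 : δ*‖zc - X‖^2 ≤ m*L^2*(2*(δ+L) - m*L) := by linarith [hXzδ, e0δ, e2]
    have e4' : 0 ≤ (m*L)^2*L := mul_nonneg (sq_nonneg _) hL0.le
    have e4 : m*L^2*(2*(δ+L) - m*L) ≤ 2*m*L^2*(δ+L) := by linarith [e4']
    have e5 : 2*m*L^2*(δ+L) ≤ θ^2*δ/8 := by linarith [hm3']
    have e6 : δ*‖zc - X‖^2 ≤ δ*(θ^2/8) := by linarith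
    exact (mul_le_mul_iff_right₀ hδ0).mp e6
  have hzcX' : dist zc X ≤ θ/2 := by
    rw [dist_eq_norm]
    refine le_of_sq_le'' (norm_nonneg _) (by positivity) ?_
    calc ‖zc - X‖^2 ≤ θ^2/8 := hzcX
    _ ≤ (θ/2)^2 := by nlinarith
  have hmL : m * L ≤ θ/2 := by
    have hpos : 0 < 2*L := by positivity
    have := (le_div_iff₀ hpos).mp hm2
    linarith
  have htri : dist zc b' ≤ dist zc X + dist X b' := dist_triangle _ _ _
  have hzb' : δ + (1-m)*L ≤ dist zc b' :=
    hzc2.trans (Metric.infDist_le_dist_of_mem hb')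
  nlinarith [htri, hzb', hzcX', hmL]

set_option maxHeartbeats 1600000 in
/-- Federer's segment extension: the distance function grows at unit speed along the
normal ray, within the uniqueness tube. -/
private lemma growth_lemma (A : Set E) (hAc : IsCompact A) (hAne : A.Nonempty) (r : ℝ)
    (hU : ∀ z : E, Metric.infDist z A < r →
      ∃! x, x ∈ A ∧ ∀ x' ∈ A, dist z x ≤ dist z x')
    (a : E) (haA : a ∈ A) (v : E) (hv : ‖v‖ = 1) (δ : ℝ) (hδ0 : 0 < δ)
    (hyd : Metric.infDist (a + δ • v) A = δ) :
    ∀ ρ, δ ≤ ρ → ρ < r → Metric.infDist (a + ρ • v) A = ρ := by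
  intro ρ hδρ hρr
  set y := a + δ • v with hy
  have hub : Metric.infDist (a + ρ • v) A ≤ ρ := by
    refine (Metric.infDist_le_dist_of_mem haA).trans ?_
    rw [dist_eq_norm]
    simp only [add_sub_cancel_left]
    rw [norm_smul, hv, Real.norm_eq_abs, mul_one, abs_of_nonneg (by linarith)]
  rcases eq_or_lt_of_le hδρ with hρδ | hρδ
  · rw [← hρδ]; exact hyd
  -- now δ < ρ
  set L := ρ - δ with hLdef
  have hL0 : 0 < L := by rw [hLdef]; linarith
  -- the good-set argument
  have claim : ∀ c : ℝ, 0 < c → c < 1 →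
      ∃ zc : E, dist zc y ≤ L ∧ δ + c * L ≤ Metric.infDist zc A := by
    intro c hc0 hc1
    set G : Set ℝ := {S | S ∈ Icc (0:ℝ) L ∧
      ∃ z : E, dist z y ≤ S ∧ δ + c * S ≤ Metric.infDist z A} with hG
    have hG0 : (0:ℝ) ∈ G := by
      refine ⟨⟨le_refl 0, hL0.le⟩, y, by simp, by simp [hyd]⟩
    have hGne : G.Nonempty := ⟨0, hG0⟩
    have hGbdd : BddAbove G := ⟨L, fun S hS => hS.1.2⟩
    set S := sSup G with hSdef
    have hS_le_L : S ≤ L := csSup_le hGne (fun b hb => hb.1.2)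
    have hS0 : 0 ≤ S := le_csSup hGbdd hG0
    -- witness at S
    have hwit : ∃ z : E, dist z y ≤ S ∧ δ + c * S ≤ Metric.infDist z A := by
      have hseq : ∀ n : ℕ, ∃ z : E, dist z y ≤ S ∧
          δ + c * S - 1/((n:ℝ)+1) ≤ Metric.infDist z A := by
        intro n
        have hpos : (0:ℝ) < 1/((n:ℝ)+1) := by positivity
        have hlt : S - 1/((n:ℝ)+1) < S := by linarith
        obtain ⟨S', hS'G, hgt⟩ := exists_lt_of_lt_csSup hGne hlt
        obtain ⟨⟨hS'0, hS'L⟩, z, hz1, hz2⟩ := hS'G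
        refine ⟨z, hz1.trans (le_csSup hGbdd ⟨⟨hS'0, hS'L⟩, z, hz1, hz2⟩), ?_⟩
        have hm : c * (S - 1/((n:ℝ)+1)) ≤ c * S' := mul_le_mul_of_nonneg_left hgt.le hc0.le
        have h2 : c * (1/((n:ℝ)+1)) ≤ 1/((n:ℝ)+1) := by nlinarith
        nlinarith
      choose zs hz1 hz2 using hseq
      have hball : ∀ n, zs n ∈ closedBall y S := fun n => Metric.mem_closedBall.mpr (hz1 n)
      obtain ⟨z, hzball, φ, hφ, htend⟩ := (isCompact_closedBall y S).tendsto_subseq hball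
      refine ⟨z, Metric.mem_closedBall.1 hzball, ?_⟩
      have hcont : Filter.Tendsto (fun n => Metric.infDist ((zs ∘ φ) n) A) Filter.atTop
          (nhds (Metric.infDist z A)) := ((Metric.continuous_infDist_pt A).tendsto z).comp htend
      have hlim2 : Filter.Tendsto (fun n : ℕ => δ + c * S - 1/((φ n : ℝ)+1)) Filter.atTop
          (nhds (δ + c * S)) := by
        have h0 : Filter.Tendsto (fun n : ℕ => 1/((φ n : ℝ)+1)) Filter.atTop (nhds 0) :=
          tendsto_one_div_add_atTop_nhds_zero_nat.comp hφ.tendsto_atTop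
        have h1 := Filter.Tendsto.sub (tendsto_const_nhds (x := δ + c * S)
          (f := Filter.atTop (α := ℕ))) h0
        simpa using h1
      exact le_of_tendsto_of_tendsto' hlim2 hcont (fun n => hz2 (φ n))
    obtain ⟨z, hzy, hzd⟩ := hwit
    rcases eq_or_lt_of_le hS_le_L with hSL | hSL
    · exact ⟨z, by rwa [← hSL], by rwa [← hSL]⟩
    -- S < L : derive a contradiction via the step lemma
    exfalso
    have hdz0 : 0 < Metric.infDist z A := by
      have : 0 ≤ c * S := mul_nonneg hc0.le hS0
      linarith
    have hdzr : Metric.infDist z A < r := by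
      have h1 : Metric.infDist z A ≤ Metric.infDist y A + dist z y :=
        Metric.infDist_le_infDist_add_dist
      rw [hyd] at h1
      have h2 : L ≤ ρ := by rw [hLdef]; linarith
      linarith
    obtain ⟨b, hbA, hbd⟩ := hAc.exists_infDist_eq_dist hAne z
    have huniq : ∀ b' ∈ A, dist z b' = Metric.infDist z A → b' = b := by
      obtain ⟨x₀, hx₀, hx₀u⟩ := hU z hdzr
      have hbmin : b ∈ A ∧ ∀ x' ∈ A, dist z b ≤ dist z x' := by
        refine ⟨hbA, fun x' hx' => ?_⟩
        rw [← hbd]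
        exact Metric.infDist_le_dist_of_mem hx'
      have hbx₀ : b = x₀ := hx₀u b hbmin
      intro b' hb'A hb'd
      have hb'x₀ : b' = x₀ := hx₀u b' ⟨hb'A, fun x' hx' => by
        rw [hb'd]; exact Metric.infDist_le_dist_of_mem hx'⟩
      rw [hb'x₀, hbx₀]
    obtain ⟨h, hh0, hhle, hstep⟩ := step_lemma A hAc hAne z b hbA hbd.symm huniq hdz0
      c hc0 hc1 (L - S) (by linarith)
    set z' := z + h • ((Metric.infDist z A)⁻¹ • (z - b)) with hz'def
    have hdzb : ‖z - b‖ = Metric.infDist z A := by rw [← dist_eq_norm, ← hbd]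
    have h1 : dist z' z = h := by
      rw [hz'def, dist_eq_norm]
      simp only [add_sub_cancel_left]
      rw [norm_smul, norm_smul, Real.norm_eq_abs, Real.norm_eq_abs,
        abs_of_pos hh0, abs_inv, abs_of_pos hdz0, hdzb,
        inv_mul_cancel₀ hdz0.ne', mul_one]
    have hz'y : dist z' y ≤ S + h := by
      calc dist z' y ≤ dist z' z + dist z y := dist_triangle _ _ _
      _ ≤ S + h := by rw [h1]; linarith
    have hmem : S + h ∈ G := by
      refine ⟨⟨by linarith, by linarith⟩, z', hz'y, ?_⟩
      have : δ + c * S + c * h ≤ Metric.infDist z A + c * h := by linarith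
      calc δ + c * (S + h) = δ + c * S + c * h := by ring
      _ ≤ Metric.infDist z A + c * h := this
      _ ≤ Metric.infDist z' A := hstep
    have : S + h ≤ S := le_csSup hGbdd hmem
    linarith
  have hlow : ∀ b' ∈ A, ρ ≤ dist (a + ρ • v) b' := by
    intro b' hb'
    have h := rigid_lemma A hAne a haA v hv δ L hδ0 hL0 b' hb' claim
    refine le_of_forall_pos_le_add ?_
    intro θ hθ
    have h2 := h θ hθ
    have h3 : a + ρ • v = a + (δ + L) • v := by rw [hLdef]; ring_nf
    rw [h3]
    linarith
  exact le_antisymm hub (le_infDist' hAne hlow)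



set_option maxHeartbeats 1600000 in
private lemma forward_lemma (ε α r t : ℝ) (hε : 0 ≤ ε) (hα : 0 ≤ α) (hr : 0 < r)
    (hαεr : α + ε < r) (hK0 : 0 < (r - ε)^2 - α^2)
    (htε : ε ≤ t) (htβ : r - Real.sqrt ((r - ε) ^ 2 - α ^ 2) ≤ t)
    (A : Set E) (hA : A.Nonempty) (hAc : IsCompact A)
    (hU : ∀ z : E, Metric.infDist z A < r →
      ∃! x, x ∈ A ∧ ∀ x' ∈ A, dist z x ≤ dist z x')
    (σ : Set E) (hσε : ∀ p ∈ σ, Metric.infDist p A ≤ ε) (hσne : σ.Nonempty)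
    (hne : (⋂ p ∈ σ, Metric.closedBall p α).Nonempty) :
    ((⋃ x ∈ A, Metric.closedBall x t) ∩ ⋂ p ∈ σ, Metric.closedBall p α).Nonempty := by
  have ht0 : 0 ≤ t := le_trans hε htε
  obtain ⟨y, hy⟩ := hne
  have hyball : ∀ p ∈ σ, dist y p ≤ α := by
    intro p hp
    have h := Set.mem_iInter₂.1 hy p hp
    rwa [Metric.mem_closedBall] at h
  obtain ⟨p₀, hp₀⟩ := hσne
  have hδle : Metric.infDist y A ≤ α + ε := by
    have h1 : Metric.infDist y A ≤ Metric.infDist p₀ A + dist y p₀ :=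
      Metric.infDist_le_infDist_add_dist
    have h2 := hσε p₀ hp₀
    have h3 := hyball p₀ hp₀
    linarith
  by_cases hδt : Metric.infDist y A ≤ t
  · -- y itself works
    obtain ⟨a, haA, had⟩ := hAc.exists_infDist_eq_dist hA y
    refine ⟨y, Set.mem_iUnion₂.2 ⟨a, haA, Metric.mem_closedBall.2 ?_⟩, hy⟩
    rw [← had]
    exact hδt
  push_neg at hδt
  obtain ⟨a, haA, had⟩ := hAc.exists_infDist_eq_dist hA y
  obtain ⟨δ, hδdef⟩ : ∃ x : ℝ, Metric.infDist y A = x := ⟨_, rfl⟩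
  rw [hδdef] at had hδle hδt
  have hδ0 : 0 < δ := lt_of_le_of_lt ht0 hδt
  have hδr : δ < r := lt_of_le_of_lt hδle hαεr
  obtain ⟨v, hvdef⟩ : ∃ v : E, v = δ⁻¹ • (y - a) := ⟨_, rfl⟩
  have hya : ‖y - a‖ = δ := by rw [← dist_eq_norm, ← had]
  have hvnorm : ‖v‖ = 1 := by
    rw [hvdef, norm_smul, Real.norm_eq_abs, abs_inv, abs_of_pos hδ0, hya,
      inv_mul_cancel₀ hδ0.ne']
  have hyav : y = a + δ • v := by
    rw [hvdef, smul_inv_smul₀ hδ0.ne']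
    abel
  have hyd : Metric.infDist (a + δ • v) A = δ := by rw [← hyav, hδdef]
  -- Federer extension up to every ρ < r, hence the tangent-ball bound at radius r
  have hgrow := growth_lemma A hAc hA r hU a haA v hvnorm δ hδ0 hyd
  have hFED : ∀ b' ∈ A, r ≤ dist (a + r • v) b' := by
    intro b' hb'
    have hcontg : Filter.Tendsto (fun ρ : ℝ => dist (a + ρ • v) b' - ρ)
        (nhdsWithin r (Iio r)) (nhds (dist (a + r • v) b' - r)) := by
      apply Filter.Tendsto.mono_left ?_ nhdsWithin_le_nhds
      have hc : Continuous fun ρ : ℝ => dist (a + ρ • v) b' - ρ := by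
        apply Continuous.sub ?_ continuous_id
        exact (continuous_const.add (continuous_id.smul continuous_const)).dist
          continuous_const
      exact hc.tendsto r
    have hIoo : Ioo δ r ∈ nhdsWithin r (Iio r) :=
      Ioo_mem_nhdsLT_of_mem ⟨hδr, le_refl r⟩
    have hev : ∀ᶠ ρ in nhdsWithin r (Iio r), 0 ≤ dist (a + ρ • v) b' - ρ := by
      filter_upwards [hIoo]
      intro ρ hρ
      have hg := hgrow ρ hρ.1.le hρ.2
      have h1 : ρ ≤ dist (a + ρ • v) b' := by
        calc ρ = Metric.infDist (a + ρ • v) A := hg.symm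
        _ ≤ dist (a + ρ • v) b' := Metric.infDist_le_dist_of_mem hb'
      linarith
    have h0 : 0 ≤ dist (a + r • v) b' - r := ge_of_tendsto hcontg hev
    linarith
  -- the candidate point z = a + t • v
  have hzA : dist (a + t • v) a = t := by
    rw [dist_eq_norm]
    simp only [add_sub_cancel_left]
    rw [norm_smul, hvnorm, Real.norm_eq_abs, abs_of_nonneg ht0, mul_one]
  refine ⟨a + t • v, Set.mem_iUnion₂.2 ⟨a, haA, Metric.mem_closedBall.2 hzA.le⟩, ?_⟩
  refine Set.mem_iInter₂.2 ?_
  intro p hp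
  rw [Metric.mem_closedBall]
  -- quadratic geometry
  obtain ⟨ap, hapA, hapd⟩ := hAc.exists_infDist_eq_dist hA p
  have hapε : dist p ap ≤ ε := by rw [← hapd]; exact hσε p hp
  have hC1' : r - ε ≤ dist (a + r • v) p := by
    have h1 := hFED ap hapA
    have h2 : dist (a + r • v) ap ≤ dist (a + r • v) p + dist p ap :=
      dist_triangle _ _ _
    linarith
  have hexp : ∀ s : ℝ, 0 ≤ s →
      dist (a + s • v) p ^ 2 = s^2 - 2*s*⟪v, p - a⟫ + ‖p - a‖^2 := by
    intro s hs
    have h1 : a + s • v - p = s • v - (p - a) := by abel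
    rw [dist_eq_norm, h1, norm_sub_sq_real, real_inner_smul_left, norm_smul,
      Real.norm_eq_abs, abs_of_nonneg hs, hvnorm, mul_one]
    ring
  have hC1 : (r - ε)^2 ≤ r^2 - 2*r*⟪v, p - a⟫ + ‖p - a‖^2 := by
    rw [← hexp r hr.le]
    exact pow_le_pow_left₀ (by linarith) hC1' 2
  have hC2 : δ^2 - 2*δ*⟪v, p - a⟫ + ‖p - a‖^2 ≤ α^2 := by
    rw [← hexp δ hδ0.le]
    have h1 : dist (a + δ • v) p ≤ α := by rw [← hyav]; exact hyball p hp
    exact pow_le_pow_left₀ dist_nonneg h1 2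
  have hA3 : (r - t)^2 ≤ (r - ε)^2 - α^2 := by
    have h1 : r - t ≤ Real.sqrt ((r - ε)^2 - α^2) := by linarith
    have h2 : 0 ≤ r - t := by linarith
    calc (r - t)^2 ≤ Real.sqrt ((r - ε)^2 - α^2)^2 := pow_le_pow_left₀ h2 h1 2
    _ = (r - ε)^2 - α^2 := Real.sq_sqrt hK0.le
  -- final quadratic inequality
  obtain ⟨J, hJdef⟩ : ∃ x : ℝ, ⟪v, p - a⟫ = x := ⟨_, rfl⟩
  obtain ⟨N, hNdef⟩ : ∃ x : ℝ, ‖p - a‖^2 = x := ⟨_, rfl⟩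
  rw [hJdef, hNdef] at hC1 hC2
  have hrt0 : (0:ℝ) ≤ r - t := by linarith
  have hδt0 : (0:ℝ) ≤ δ - t := by linarith
  have hgoal_sq : dist (a + t • v) p ^ 2 ≤ α^2 := by
    rw [hexp t ht0, hJdef, hNdef]
    have s1 : 2*J*(r - δ) ≤ r^2 - δ^2 + α^2 - (r-ε)^2 := by nlinarith [hC1, hC2]
    have s2 : r^2 - δ^2 + α^2 - (r-ε)^2 ≤ r^2 - δ^2 - (r-t)^2 := by linarith [hA3]
    have hprod : (0:ℝ) ≤ (r - t)*(δ - t) := mul_nonneg hrt0 hδt0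
    have s3 : r^2 - δ^2 - (r-t)^2 ≤ (t+δ)*(r-δ) := by nlinarith [hprod]
    have s4 : 2*J ≤ t + δ := by
      have hpos : 0 < r - δ := by linarith
      have h5 := (mul_le_mul_iff_left₀ hpos).mp (by linarith : 2*J*(r-δ) ≤ (t+δ)*(r-δ))
      linarith
    have s5 : (δ - t)*(2*J) ≤ (δ - t)*(t + δ) :=
      mul_le_mul_of_nonneg_left s4 hδt0
    nlinarith [hC2, s5]
  exact le_of_sq_le'' dist_nonneg hα hgoal_sq

end Aux

set_option maxHeartbeats 1600000 in
theorem stmt_9 {d : ℕ} (ε α r : ℝ) (hε : 0 ≤ ε) (hα : 0 ≤ α) (hr : 0 < r)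
    (hcond : Real.sqrt 2 * α < r - ε)
    (A : Set (EuclideanSpace ℝ (Fin d))) (hA : A.Nonempty) (hAc : IsCompact A)
    (hreach : ENNReal.ofReal r ≤ reach A)
    (P : Set (EuclideanSpace ℝ (Fin d))) (hPne : P.Nonempty) (hPf : P.Finite)
    (hH : Metric.hausdorffDist A P ≤ ε) :
    ∀ t : ℝ, r - Real.sqrt ((r - ε) ^ 2 - α ^ 2) ≤ t →
      ∀ σ ⊆ P, σ.Nonempty →
        ((⋂ p ∈ σ, Metric.closedBall p α).Nonempty ↔
          ((⋃ x ∈ A, Metric.closedBall x t) ∩ ⋂ p ∈ σ, Metric.closedBall p α).Nonempty) := by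
  intro t ht σ hσP hσne
  -- basic arithmetic facts
  have hsqrt2 : (1:ℝ) ≤ Real.sqrt 2 := by
    rw [show (1:ℝ) = Real.sqrt 1 by simp]
    exact Real.sqrt_le_sqrt (by norm_num)
  have hαre : α < r - ε := by nlinarith [hcond, hsqrt2, hα]
  have hαεr : α + ε < r := by linarith
  have hK0 : 0 < (r - ε)^2 - α^2 := by nlinarith
  have hβε : ε ≤ r - Real.sqrt ((r - ε)^2 - α^2) := by
    have h1 : Real.sqrt ((r - ε)^2 - α^2) ≤ Real.sqrt ((r-ε)^2) :=
      Real.sqrt_le_sqrt (by nlinarith)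
    rw [Real.sqrt_sq (by linarith : (0:ℝ) ≤ r - ε)] at h1
    linarith
  have htε : ε ≤ t := le_trans hβε ht
  -- Hausdorff distance facts
  have hedist : EMetric.hausdorffEdist A P ≠ ⊤ :=
    Metric.hausdorffEdist_ne_top_of_nonempty_of_bounded hA hPne hAc.isBounded hPf.isBounded
  have hedist' : EMetric.hausdorffEdist P A ≠ ⊤ := by
    unfold EMetric.hausdorffEdist at hedist ⊢
    rwa [EMetric.hausdorffEdist_comm] at hedist
  have hPA : ∀ p ∈ σ, Metric.infDist p A ≤ ε := by
    intro p hp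
    have h1 : Metric.infDist p A ≤ Metric.infDist p P + Metric.hausdorffDist P A :=
      Metric.infDist_le_infDist_add_hausdorffDist hedist'
    rw [Metric.infDist_zero_of_mem (hσP hp), Metric.hausdorffDist_comm] at h1
    linarith
  -- uniqueness of nearest points inside the tube of radius r
  have hU : ∀ z : EuclideanSpace ℝ (Fin d), Metric.infDist z A < r →
      ∃! x, x ∈ A ∧ ∀ x' ∈ A, dist z x ≤ dist z x' := by
    intro z hz
    have h1 : ENNReal.ofReal (Metric.infDist z A) < ENNReal.ofReal r :=
      (ENNReal.ofReal_lt_ofReal_iff hr).2 hz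
    have h2 : ENNReal.ofReal (Metric.infDist z A) < reach A := lt_of_lt_of_le h1 hreach
    rw [reach, lt_sSup_iff] at h2
    obtain ⟨b, hbmem, hlt⟩ := h2
    exact hbmem z hlt
  constructor
  · exact forward_lemma ε α r t hε hα hr hαεr hK0 htε ht A hA hAc hU σ hPA hσne
  · rintro ⟨x, hx⟩
    exact ⟨x, hx.2⟩
end

section
/- Let X ⊆ ℝ^d be a nonempty compact set and let closedBall(c, ρ) be a smallest enclosing ball of X. Then the center c belongs to the convex hull of X. -/
open Metric Set

section aux

variable {d : ℕ}

local notation "E" => EuclideanSpace ℝ (Fin d)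

lemma aux_isCompact_convexHull {X : Set (EuclideanSpace ℝ (Fin d))}
    (hX : X.Nonempty) (hXc : IsCompact X) : IsCompact (convexHull ℝ X) := by
  classical
  obtain ⟨x₀, hx₀⟩ := hX
  set n := d + 1 with hn
  let f : (Fin n → ℝ) × (Fin n → E) → E := fun p => ∑ i, p.1 i • p.2 i
  have hf : Continuous f := by
    apply continuous_finset_sum
    intro i _
    exact ((continuous_apply i).comp continuous_fst).smul
      ((continuous_apply i).comp continuous_snd)
  have hS : IsCompact ((stdSimplex ℝ (Fin n)) ×ˢ (Set.univ.pi fun _ : Fin n => X)) :=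
    IsCompact.prod (isCompact_stdSimplex ℝ _) (isCompact_univ_pi fun _ => hXc)
  have him : convexHull ℝ X = f '' ((stdSimplex ℝ (Fin n)) ×ˢ (Set.univ.pi fun _ : Fin n => X)) := by
    apply Set.Subset.antisymm
    · intro x hx
      obtain ⟨ι, hι, z, w, hz, hind, hwpos, hwsum, hx⟩ :=
        eq_pos_convex_span_of_mem_convexHull hx
      have hcard : Fintype.card ι ≤ n := by
        have h1 := hind.card_le_finrank_succ
        have h2 : Module.finrank ℝ (vectorSpan ℝ (Set.range z)) ≤ d := by
          simpa [finrank_euclideanSpace_fin] using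
            Submodule.finrank_le (vectorSpan ℝ (Set.range z))
        omega
      obtain ⟨g⟩ : Nonempty (ι ↪ Fin n) := by
        apply Function.Embedding.nonempty_of_card_le
        simpa using hcard
      let w' : Fin n → ℝ := fun j => if h : ∃ i, g i = j then w h.choose else 0
      let z' : Fin n → E := fun j => if h : ∃ i, g i = j then z h.choose else x₀
      have hwg : ∀ i, w' (g i) = w i := by
        intro i
        have h : ∃ i', g i' = g i := ⟨i, rfl⟩
        have : h.choose = i := g.injective h.choose_spec
        simp only [w', dif_pos h, this]
      have hzg : ∀ i, z' (g i) = z i := by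
        intro i
        have h : ∃ i', g i' = g i := ⟨i, rfl⟩
        have : h.choose = i := g.injective h.choose_spec
        simp only [z', dif_pos h, this]
      have hw0 : ∀ j, j ∉ Finset.univ.image g → w' j = 0 := by
        intro j hj
        have : ¬ ∃ i, g i = j := by
          rintro ⟨i, rfl⟩
          exact hj (Finset.mem_image_of_mem g (Finset.mem_univ i))
        simp only [w', dif_neg this]
      have hsum1 : ∑ j, w' j = 1 := by
        rw [← Finset.sum_subset (Finset.subset_univ (Finset.univ.image g))
          (fun j _ hj => hw0 j hj)]
        rw [Finset.sum_image (fun a _ b _ h => g.injective h)]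
        simp only [hwg]
        exact hwsum
      have hsumx : ∑ j, w' j • z' j = x := by
        rw [← Finset.sum_subset (Finset.subset_univ (Finset.univ.image g))
          (fun j _ hj => by rw [hw0 j hj, zero_smul])]
        rw [Finset.sum_image (fun a _ b _ h => g.injective h)]
        simp only [hwg, hzg]
        exact hx
      refine ⟨(w', z'), ⟨⟨?_, hsum1⟩, ?_⟩, hsumx⟩
      · intro j
        by_cases h : ∃ i, g i = j
        · simp only [w', dif_pos h]
          exact (hwpos _).le
        · simp only [w', dif_neg h]; exact le_rfl
      · intro j _
        by_cases h : ∃ i, g i = j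
        · simp only [z', dif_pos h]
          exact hz (Set.mem_range_self _)
        · simp only [z', dif_neg h]
          exact hx₀
    · rintro y ⟨⟨w, z⟩, ⟨⟨hw0, hw1⟩, hzX⟩, rfl⟩
      exact (convex_convexHull ℝ X).sum_mem (fun i _ => hw0 i) hw1
        (fun i _ => subset_convexHull ℝ X (hzX i (Set.mem_univ i)))
  rw [him]
  exact hS.image hf

end aux

/-- `closedBall c ρ` is a smallest enclosing ball of `X`: it contains `X` and every
closed ball containing `X` has radius at least `ρ`. -/
def IsSmallestEnclosingBall {d : ℕ} (X : Set (EuclideanSpace ℝ (Fin d)))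
    (c : EuclideanSpace ℝ (Fin d)) (ρ : ℝ) : Prop :=
  X ⊆ Metric.closedBall c ρ ∧
    ∀ (c' : EuclideanSpace ℝ (Fin d)) (ρ' : ℝ), X ⊆ Metric.closedBall c' ρ' → ρ ≤ ρ'

theorem stmt_14 {d : ℕ} (X : Set (EuclideanSpace ℝ (Fin d)))
    (hX : X.Nonempty) (hXc : IsCompact X)
    (c : EuclideanSpace ℝ (Fin d)) (ρ : ℝ)
    (hseb : IsSmallestEnclosingBall X c ρ) :
    c ∈ convexHull ℝ X := by
  set K := convexHull ℝ X with hK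
  have hKc : IsCompact K := aux_isCompact_convexHull hX hXc
  have hKne : K.Nonempty := hX.mono (subset_convexHull ℝ X)
  have hKconv : Convex ℝ K := convex_convexHull ℝ X
  obtain ⟨p, hpK, hpmin⟩ := exists_norm_eq_iInf_of_complete_convex hKne
    (hKc.isClosed.isComplete) hKconv c
  have hinner : ∀ w ∈ K, inner ℝ (c - p) (w - p) ≤ (0 : ℝ) :=
    (norm_eq_iInf_iff_real_inner_le_zero hKconv hpK).mp hpmin
  obtain ⟨x₀, hx₀⟩ := hX
  have hρ0 : 0 ≤ ρ := le_trans dist_nonneg (hseb.1 hx₀)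
  set δ := ‖c - p‖ with hδ
  have key : ∀ x ∈ X, ‖x - p‖^2 ≤ ρ^2 - δ^2 := by
    intro x hx
    have h1 : inner ℝ (c - p) (x - p) ≤ (0 : ℝ) := hinner x (subset_convexHull ℝ X hx)
    have h2 : ‖x - c‖ ≤ ρ := by
      have := hseb.1 hx
      rwa [mem_closedBall, dist_eq_norm] at this
    have h3 : ‖x - c‖^2 ≤ ρ^2 := by nlinarith [norm_nonneg (x - c)]
    have hexp : ‖x - c‖^2 = ‖x - p‖^2 - 2 * inner ℝ (c - p) (x - p) + δ^2 := by
      have hrw : x - c = (x - p) - (c - p) := by abel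
      rw [hrw, norm_sub_sq_real, real_inner_comm]
      try ring
    nlinarith
  have hδ2 : 0 ≤ ρ^2 - δ^2 := le_trans (sq_nonneg _) (key x₀ hx₀)
  set ρ' := Real.sqrt (ρ^2 - δ^2) with hρ'
  have hsub : X ⊆ Metric.closedBall p ρ' := by
    intro x hx
    rw [mem_closedBall, dist_eq_norm]
    have := key x hx
    nlinarith [Real.sq_sqrt hδ2, Real.sqrt_nonneg (ρ^2 - δ^2), norm_nonneg (x - p)]
  have hle : ρ ≤ ρ' := hseb.2 p ρ' hsub
  have hsq : ρ^2 ≤ ρ^2 - δ^2 := by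
    have := Real.sq_sqrt hδ2
    nlinarith [Real.sqrt_nonneg (ρ^2 - δ^2)]
  have hδ0 : δ = 0 := by nlinarith [sq_nonneg δ, norm_nonneg (c - p)]
  have hcp : c = p := by rwa [hδ, norm_eq_zero, sub_eq_zero] at hδ0
  rw [hcp]; exact hpK
end
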